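/- In Talagrand's space, for every partition (Γ_n)_{n∈ℕ} of Γ = ℕ^ℕ into countably many sets, there exists an infinite admissible set s contained in some Γ_n. -/

import Mathlib

/-- A subset `s` of `ℕ^ℕ` is admissible if there is `n` such that any two distinct elements
of `s` agree on the coordinates before `n` and differ at coordinate `n` (sets with at most
one element are admissible). -/
def TalAdmissible (s : Set (ℕ → ℕ)) : Prop :=
  ∃ n : ℕ, ∀ γ₁ ∈ s, ∀ γ₂ ∈ s, γ₁ ≠ γ₂ → (∀ k < n, γ₁ k = γ₂ k) ∧ γ₁ n ≠ γ₂ n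

/-- Diagonal function built by strong recursion: the value at `n` is chosen by `pick`
from the values at earlier coordinates. -/
noncomputable def talF (pick : ℕ → (ℕ → ℕ) → ℕ) : ℕ → ℕ
  | n => pick n (fun k => if h : k < n then talF pick k else 0)
decreasing_by exact h

/-- In Talagrand's space: for every partition of `Γ = ℕ^ℕ` into countably many sets there is
an infinite admissible set contained in one piece. -/
theorem stmt14 (G : ℕ → Set (ℕ → ℕ)) (hcov : (⋃ n, G n) = Set.univ)
    (hdisj : Pairwise (Function.onFun Disjoint G)) :
    ∃ (n : ℕ) (s : Set (ℕ → ℕ)), s ⊆ G n ∧ TalAdmissible s ∧ s.Infinite := by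
  set V : ℕ → (ℕ → ℕ) → Set ℕ :=
    fun n σ => {v | ∃ γ ∈ G n, (∀ k < n, γ k = σ k) ∧ γ n = v} with hVdef
  by_cases hfin : ∀ n σ, (V n σ).Finite
  · exfalso
    have hpick : ∀ n σ, ∃ v, v ∉ V n σ := fun n σ => (hfin n σ).infinite_compl.nonempty
    choose pick hpick using hpick
    set γ : ℕ → ℕ := talF pick with hγ
    have hγeq : ∀ n, γ n = pick n (fun k => if h : k < n then γ k else 0) := by
      intro n; rw [hγ, talF]
    obtain ⟨m, hm⟩ : ∃ m, γ ∈ G m := Set.mem_iUnion.mp (hcov ▸ Set.mem_univ γ)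
    exact hpick m (fun k => if h : k < m then γ k else 0)
      ⟨γ, hm, fun k hk => by simp [hk], hγeq m⟩
  · push_neg at hfin
    obtain ⟨n, σ, hinf⟩ := hfin
    have hch : ∀ v ∈ V n σ, ∃ γ, γ ∈ G n ∧ (∀ k < n, γ k = σ k) ∧ γ n = v := by
      intro v hv; obtain ⟨γ, h1, h2, h3⟩ := hv; exact ⟨γ, h1, h2, h3⟩
    choose! f hf using hch
    have hinj : Set.InjOn f (V n σ) := by
      intro a ha b hb hab
      have : f a n = f b n := by rw [hab]
      rwa [(hf a ha).2.2, (hf b hb).2.2] at this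
    refine ⟨n, f '' V n σ, ?_, ⟨n, ?_⟩, Set.Infinite.image hinj hinf⟩
    · rintro _ ⟨v, hv, rfl⟩; exact (hf v hv).1
    · rintro _ ⟨v₁, h1, rfl⟩ _ ⟨v₂, h2, rfl⟩ hne
      refine ⟨fun k hk => ((hf v₁ h1).2.1 k hk).trans ((hf v₂ h2).2.1 k hk).symm, ?_⟩
      intro heq
      apply hne
      have : v₁ = v₂ := by
        rw [← (hf v₁ h1).2.2, ← (hf v₂ h2).2.2]; exact heq
      rw [this]
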